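/- arXiv:2007.14193 — 8 statements merged into one kernel-verified Lean document; each statement's English description precedes it below -/
import Mathlib

section
/- Let θ ∈ (π/2, π) satisfy cos θ / sin θ > −2/π (i.e. θ < arccot(−2/π)). Then for every τ > 0, every κ ∈ (0, π/(τ sin θ)], and every z ∈ Γ^τ_{θ,κ}, the complex number δ_τ(e^{−zτ}) = (1 − e^{−zτ})/τ is nonzero and satisfies |arg δ_τ(e^{−zτ})| ≤ θ; that is, δ_τ(e^{−zτ}) ∈ Σ_θ. -/
open Real Complex Set

/-- The truncated contour `Γ^τ_{θ,κ}`: points with `κ ≤ |z| ≤ π/(τ sin θ)` on the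
two rays `|arg z| = θ`, together with the arc `|z| = κ`, `|arg z| ≤ θ`. -/
def GammaTau (θ κ τ : ℝ) : Set ℂ :=
  {z : ℂ | (κ ≤ ‖z‖ ∧ ‖z‖ ≤ Real.pi / (τ * Real.sin θ) ∧ |z.arg| = θ) ∨
    (‖z‖ = κ ∧ |z.arg| ≤ θ)}

/-- Jordan-type inequality on `[0, π/2]`. -/
lemma jordan_half (t : ℝ) (ht0 : 0 ≤ t) (htp : t ≤ Real.pi / 2) :
    Real.pi * t - t ^ 2 ≤ Real.pi * Real.sin t := by
  have hπ := Real.pi_pos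
  rcases le_total t 1 with h1 | h1
  · rcases eq_or_lt_of_le ht0 with h | h
    · simp [← h]
    · have hs := Real.sin_gt_sub_cube h
      have hπ4 : Real.pi ≤ 4 := by nlinarith [Real.pi_lt_d2]
      nlinarith [sq_nonneg t, pow_pos h 3]
  · have hc : 1 - (Real.pi / 2 - t) ^ 2 / 2 ≤ Real.cos (Real.pi / 2 - t) :=
      Real.one_sub_sq_div_two_le_cos
    rw [Real.cos_pi_div_two_sub] at hc
    nlinarith [Real.pi_gt_d6, Real.pi_lt_d2,
      mul_nonneg (sub_nonneg.2 h1) (sub_nonneg.2 htp)]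

/-- Jordan-type inequality on `[0, π]`: `π t − t² ≤ π sin t`. -/
lemma jordan (t : ℝ) (ht0 : 0 ≤ t) (htp : t ≤ Real.pi) :
    Real.pi * t - t ^ 2 ≤ Real.pi * Real.sin t := by
  rcases le_total t (Real.pi / 2) with h | h
  · exact jordan_half t ht0 h
  · have key := jordan_half (Real.pi - t) (by linarith) (by linarith)
    rw [Real.sin_pi_sub] at key
    nlinarith [key]

/-- Key inequality: `2π (s − sin s) ≤ π² (1 − cos s)` on `[0, π]`. -/
lemma keyA (s : ℝ) (hs0 : 0 ≤ s) (hsp : s ≤ Real.pi) :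
    2 * Real.pi * (s - Real.sin s) ≤ Real.pi ^ 2 * (1 - Real.cos s) := by
  have hπ := Real.pi_pos
  have h1 : Real.cos s ≤ 1 - 2 / Real.pi ^ 2 * s ^ 2 :=
    Real.cos_le_one_sub_mul_cos_sq (by rwa [_root_.abs_of_nonneg hs0])
  have h2 := jordan s hs0 hsp
  have h3 : Real.pi ^ 2 * (2 / Real.pi ^ 2 * s ^ 2) = 2 * s ^ 2 := by
    field_simp
  nlinarith [mul_le_mul_of_nonneg_left h1 (le_of_lt (by positivity : (0:ℝ) < Real.pi ^ 2))]

/-- The core scalar estimate: for `s ∈ [0, π]` and `a` with `s cos θ ≤ a sin θ`,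
`sin(θ + s) ≤ eᵃ sin θ`. -/
lemma lemB (θ a s : ℝ) (hθ1 : Real.pi / 2 < θ) (hθ2 : θ < Real.pi)
    (hθ3 : -2 * Real.sin θ < Real.cos θ * Real.pi)
    (hsin : 0 < Real.sin θ)
    (hs0 : 0 ≤ s) (hsp : s ≤ Real.pi)
    (ha : Real.cos θ * s ≤ Real.sin θ * a) :
    Real.sin (θ + s) ≤ Real.exp a * Real.sin θ := by
  have hπ := Real.pi_pos
  have hQ : 0 ≤ s - Real.sin s := by linarith [Real.sin_le hs0]
  have hP : 0 ≤ 1 - Real.cos s := by linarith [Real.cos_le_one s]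
  have hA := keyA s hs0 hsp
  have hX := mul_le_mul_of_nonneg_left hA hsin.le
  have hY := mul_le_mul_of_nonneg_right (mul_le_mul_of_nonneg_right hθ3.le hQ) hπ.le
  have h6 : 0 ≤ Real.pi ^ 2 *
      (Real.sin θ * (1 - Real.cos s) + Real.cos θ * (s - Real.sin s)) := by
    nlinarith [hX, hY]
  have h5 : 0 ≤ Real.sin θ * (1 - Real.cos s) + Real.cos θ * (s - Real.sin s) := by
    nlinarith [h6, mul_pos hπ hπ]
  have step1 : Real.sin (θ + s) ≤ Real.sin θ + Real.cos θ * s := by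
    rw [Real.sin_add]
    nlinarith [h5]
  have step2 : Real.sin θ + Real.cos θ * s ≤ Real.exp a * Real.sin θ := by
    have he := Real.add_one_le_exp a
    nlinarith [mul_le_mul_of_nonneg_right he hsin.le]
  linarith

/-- If `w ≠ 0` and `cos θ * |Im w| ≤ sin θ * Re w` with `0 < θ < π`, then `|arg w| ≤ θ`. -/
lemma sector_of (θ : ℝ) (hθ0 : 0 < θ) (hθπ : θ < Real.pi) (w : ℂ) (hw : w ≠ 0)
    (h : Real.cos θ * |w.im| ≤ Real.sin θ * w.re) : |w.arg| ≤ θ := by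
  by_contra hcon
  push_neg at hcon
  set α := w.arg with hα
  have habs : 0 < ‖w‖ := norm_pos_iff.mpr hw
  have hle : |α| ≤ Real.pi := Complex.abs_arg_le_pi w
  have hre : w.re = ‖w‖ * Real.cos α := by
    have := Complex.cos_arg hw
    field_simp at this
    linarith [this]
  have him : w.im = ‖w‖ * Real.sin α := by
    have := Complex.sin_arg w
    field_simp at this
    linarith [this]
  have hsabs : |Real.sin α| = Real.sin |α| := by
    rcases abs_cases α with ⟨h1, h2⟩ | ⟨h1, h2⟩
    · rw [h1]
      exact _root_.abs_of_nonneg (Real.sin_nonneg_of_nonneg_of_le_pi h2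
        (by rw [← h1]; exact hle))
    · rw [h1, Real.sin_neg]
      have hmπ : -Real.pi ≤ α := by
        have := abs_le.mp hle
        exact this.1
      exact _root_.abs_of_nonpos (Real.sin_nonpos_of_nonpos_of_neg_pi_le h2.le hmπ)
  have hcabs : Real.cos α = Real.cos |α| := (Real.cos_abs α).symm
  have hneg : Real.sin (θ - |α|) < 0 :=
    Real.sin_neg_of_neg_of_neg_pi_lt (by linarith) (by linarith)
  rw [Real.sin_sub] at hneg
  rw [hre, him, abs_mul, _root_.abs_of_pos habs, hsabs, hcabs] at h
  nlinarith

/-- Converse: if `|arg w| ≤ θ ≤ π` then `cos θ * |Im w| ≤ sin θ * Re w`. -/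
lemma sector_re (θ : ℝ) (hθπ : θ ≤ Real.pi) (w : ℂ) (hw : w ≠ 0)
    (h : |w.arg| ≤ θ) : Real.cos θ * |w.im| ≤ Real.sin θ * w.re := by
  set α := w.arg with hα
  have habs : 0 < ‖w‖ := norm_pos_iff.mpr hw
  have hle : |α| ≤ Real.pi := Complex.abs_arg_le_pi w
  have hre : w.re = ‖w‖ * Real.cos α := by
    have := Complex.cos_arg hw
    field_simp at this
    linarith [this]
  have him : w.im = ‖w‖ * Real.sin α := by
    have := Complex.sin_arg w
    field_simp at this
    linarith [this]
  have hsabs : |Real.sin α| = Real.sin |α| := by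
    rcases abs_cases α with ⟨h1, h2⟩ | ⟨h1, h2⟩
    · rw [h1]
      exact _root_.abs_of_nonneg (Real.sin_nonneg_of_nonneg_of_le_pi h2
        (by rw [← h1]; exact hle))
    · rw [h1, Real.sin_neg]
      have hmπ : -Real.pi ≤ α := (abs_le.mp hle).1
      exact _root_.abs_of_nonpos (Real.sin_nonpos_of_nonpos_of_neg_pi_le h2.le hmπ)
  have hcabs : Real.cos α = Real.cos |α| := (Real.cos_abs α).symm
  have hpos : 0 ≤ Real.sin (θ - |α|) :=
    Real.sin_nonneg_of_nonneg_of_le_pi (by linarith) (by linarith [abs_nonneg α])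
  rw [Real.sin_sub] at hpos
  rw [hre, him, abs_mul, _root_.abs_of_pos habs, hsabs, hcabs]
  nlinarith

set_option maxHeartbeats 1000000 in
/-- For `θ ∈ (π/2, arccot(−2/π))`, on the truncated contour `Γ^τ_{θ,κ}` the quantity
`δ_τ(e^{−zτ}) = (1 − e^{−zτ})/τ` lies in the sector `Σ_θ = {w ≠ 0 : |arg w| ≤ θ}`. -/
theorem delta_mem_sector
    (θ : ℝ) (hθ1 : Real.pi / 2 < θ) (hθ2 : θ < Real.pi)
    (hθ3 : Real.cos θ / Real.sin θ > -2 / Real.pi) :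
    ∀ τ : ℝ, 0 < τ → ∀ κ : ℝ, 0 < κ → κ ≤ Real.pi / (τ * Real.sin θ) →
    ∀ z ∈ GammaTau θ κ τ,
      (1 - Complex.exp (-(z * τ))) / τ ≠ 0 ∧
      |((1 - Complex.exp (-(z * τ))) / τ).arg| ≤ θ := by
  intro τ hτ κ hκ hκle z hz
  have hπ := Real.pi_pos
  have hsinθ : 0 < Real.sin θ := Real.sin_pos_of_pos_of_lt_pi (by linarith) hθ2
  have hcosθ : Real.cos θ < 0 :=
    Real.cos_neg_of_pi_div_two_lt_of_lt hθ1 (by linarith)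
  have hθ3' : -2 * Real.sin θ < Real.cos θ * Real.pi := by
    rw [gt_iff_lt, div_lt_div_iff₀ hπ hsinθ] at hθ3
    linarith
  have hsin23 : 2 / 3 < Real.sin θ := by
    have h1 : (0:ℝ) < -Real.cos θ := by linarith
    have h3 : -Real.cos θ * 3 < 2 * Real.sin θ := by
      nlinarith [Real.pi_gt_three]
    have h4 : 9 * Real.cos θ ^ 2 < 4 * Real.sin θ ^ 2 := by
      nlinarith [h3, h1]
    nlinarith [h4, Real.sin_sq_add_cos_sq θ, hsinθ]
  -- basic facts from contour membership
  have hzfacts : κ ≤ ‖z‖ ∧ ‖z‖ ≤ Real.pi / (τ * Real.sin θ) ∧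
      |z.arg| ≤ θ := by
    rcases hz with ⟨h1, h2, h3⟩ | ⟨h1, h2⟩
    · exact ⟨h1, h2, le_of_eq h3⟩
    · exact ⟨le_of_eq h1.symm, h1.le.trans hκle, h2⟩
  obtain ⟨hz1, hz2, hz3⟩ := hzfacts
  have hz0 : z ≠ 0 := by
    intro h
    rw [h] at hz1
    simp at hz1
    linarith
  have hτsin : 0 < τ * Real.sin θ := mul_pos hτ hsinθ
  have hzabs : ‖z‖ * (τ * Real.sin θ) ≤ Real.pi := by
    rw [le_div_iff₀ hτsin] at hz2
    linarith
  -- nonvanishing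
  have hexp_ne : Complex.exp (-(z * (τ:ℂ))) ≠ 1 := by
    intro h
    obtain ⟨n, hn⟩ := Complex.exp_eq_one_iff.mp h
    rcases eq_or_ne n 0 with rfl | hn0
    · rw [Int.cast_zero, zero_mul] at hn
      rcases mul_eq_zero.mp (neg_eq_zero.mp hn) with h' | h'
      · exact hz0 h'
      · exact Complex.ofReal_ne_zero.mpr hτ.ne' h'
    · have habs := congrArg norm hn
      rw [norm_neg] at habs
      simp only [norm_mul, Complex.norm_intCast, Complex.norm_two, Complex.norm_real,
        Real.norm_eq_abs, Complex.norm_I, mul_one] at habs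
      rw [_root_.abs_of_pos hτ, _root_.abs_of_pos hπ] at habs
      have h1 : (1:ℝ) ≤ |(n:ℝ)| := by
        rw [← Int.cast_abs]
        exact_mod_cast Int.one_le_abs hn0
      have h2 : 2 * Real.pi ≤ ‖z‖ * τ := by
        rw [habs]; nlinarith
      nlinarith [norm_pos_iff.mpr hz0, hzabs, hsin23, h2, hτ]
  have hτC : (τ:ℂ) ≠ 0 := Complex.ofReal_ne_zero.mpr hτ.ne'
  have hwne : 1 - Complex.exp (-(z * (τ:ℂ))) ≠ 0 := sub_ne_zero.mpr (Ne.symm hexp_ne)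
  refine ⟨div_ne_zero hwne hτC, ?_⟩
  -- reduce to arg of 1 - exp
  have hargdiv : ((1 - Complex.exp (-(z * (τ:ℂ)))) / (τ:ℂ)).arg
      = (1 - Complex.exp (-(z * (τ:ℂ)))).arg := by
    rw [div_eq_mul_inv, ← Complex.ofReal_inv, mul_comm]
    exact Complex.arg_real_mul _ (inv_pos.2 hτ)
  rw [hargdiv]
  -- set up real and imaginary parts
  set a : ℝ := z.re * τ with hadef
  set b : ℝ := z.im * τ with hbdef
  set w : ℂ := 1 - Complex.exp (-(z * (τ:ℂ))) with hwdef
  have hwre : w.re = 1 - Real.exp (-a) * Real.cos b := by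
    simp [hwdef, Complex.exp_re, Complex.sub_re, Complex.neg_re, Complex.mul_re,
      Complex.neg_im, Complex.mul_im, Real.cos_neg, hadef, hbdef]
  have hwim : w.im = Real.exp (-a) * Real.sin b := by
    simp [hwdef, Complex.exp_im, Complex.sub_im, Complex.neg_re, Complex.mul_re,
      Complex.neg_im, Complex.mul_im, Real.sin_neg, hadef, hbdef]
  -- the contour gives the key scalar constraints
  have hzre : Real.cos θ * |z.im| ≤ Real.sin θ * z.re := sector_re θ hθ2.le z hz0 hz3
  have hab : Real.cos θ * |b| ≤ Real.sin θ * a := by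
    have hb' : |b| = |z.im| * τ := by
      rw [hbdef, abs_mul, _root_.abs_of_pos hτ]
    rw [hb', hadef]
    nlinarith
  have hbb : |b| * Real.sin θ ≤ Real.pi := by
    have h1 : |b| ≤ ‖z‖ * τ := by
      rw [hbdef, abs_mul, _root_.abs_of_pos hτ]
      have := Complex.abs_im_le_norm z
      nlinarith
    nlinarith
  -- the main scalar inequality
  have hkey : Real.sin θ * Real.cos b + Real.cos θ * |Real.sin b| ≤
      Real.exp a * Real.sin θ := by
    set s : ℝ := |b| with hsdef
    have hs0 : 0 ≤ s := abs_nonneg b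
    have hcos : Real.cos b = Real.cos s := (Real.cos_abs b).symm
    have hsinabs : |Real.sin b| = |Real.sin s| := by
      rcases abs_cases b with ⟨h1, _⟩ | ⟨h1, _⟩
      · rw [hsdef, h1]
      · rw [hsdef, h1, Real.sin_neg, abs_neg]
    rcases le_total s Real.pi with hsp | hsp
    · have habs' : |Real.sin s| = Real.sin s :=
        _root_.abs_of_nonneg (Real.sin_nonneg_of_nonneg_of_le_pi hs0 hsp)
      rw [hcos, hsinabs, habs']
      have := lemB θ a s hθ1 hθ2 hθ3' hsinθ hs0 hsp hab
      rw [Real.sin_add] at this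
      linarith
    · -- here π < s < 3π/2 and sin(θ - s) ≤ 0 does the job
      have hs32 : s < 3 * Real.pi / 2 := by nlinarith
      have hsneg : Real.sin s ≤ 0 := by
        have h1 : Real.sin (s - Real.pi) = -Real.sin s := Real.sin_sub_pi s
        have h2 : 0 ≤ Real.sin (s - Real.pi) :=
          Real.sin_nonneg_of_nonneg_of_le_pi (by linarith) (by linarith)
        linarith
      have habs' : |Real.sin s| = -Real.sin s := abs_of_nonpos hsneg
      rw [hcos, hsinabs, habs']
      have hsin_ts : Real.sin (θ - s) ≤ 0 :=
        Real.sin_nonpos_of_nonpos_of_neg_pi_le (by linarith) (by linarith)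
      rw [Real.sin_sub] at hsin_ts
      linarith [mul_pos (Real.exp_pos a) hsinθ, hsin_ts]
  -- conclude via the sector criterion
  apply sector_of θ (by linarith) hθ2 w hwne
  rw [hwre, hwim, abs_mul, _root_.abs_of_pos (Real.exp_pos (-a))]
  have hE : Real.exp (-a) * Real.exp a = 1 := by
    rw [← Real.exp_add]; simp
  have h7 := mul_le_mul_of_nonneg_left hkey (Real.exp_pos (-a)).le
  have h8 : Real.exp (-a) * (Real.exp a * Real.sin θ) = Real.sin θ := by
    rw [← mul_assoc, hE, one_mul]
  rw [h8] at h7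
  nlinarith [h7]
end

section
/- Let θ ∈ (π/2, π) satisfy cos θ / sin θ > −2/π. Then there exist constants C₀, C₁ > 0, depending only on θ, such that for every τ > 0, every κ ∈ (0, π/(τ sin θ)], and every z ∈ Γ^τ_{θ,κ}: C₀ |z| ≤ |(1 − e^{−zτ})/τ| ≤ C₁ |z|. -/
open Real Complex Set

/-- Two-sided bound `C₀|z| ≤ |δ_τ(e^{−zτ})| ≤ C₁|z|` on the truncated contour. -/
theorem delta_two_sided_bound
    (θ : ℝ) (hθ1 : Real.pi / 2 < θ) (hθ2 : θ < Real.pi)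
    (hθ3 : Real.cos θ / Real.sin θ > -2 / Real.pi) :
    ∃ C₀ > (0 : ℝ), ∃ C₁ > (0 : ℝ),
      ∀ τ : ℝ, 0 < τ → ∀ κ : ℝ, 0 < κ → κ ≤ Real.pi / (τ * Real.sin θ) →
      ∀ z ∈ GammaTau θ κ τ,
        C₀ * ‖z‖ ≤ ‖(1 - Complex.exp (-(z * τ))) / τ‖ ∧
        ‖(1 - Complex.exp (-(z * τ))) / τ‖ ≤ C₁ * ‖z‖ := by
  have hπ : (0:ℝ) < Real.pi := Real.pi_pos
  have hπ3 : (3:ℝ) < Real.pi := Real.pi_gt_three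
  have hθ0 : 0 < θ := lt_trans (by positivity) hθ1
  have hsinpos : 0 < Real.sin θ := Real.sin_pos_of_pos_of_lt_pi hθ0 hθ2
  have hcosneg : Real.cos θ < 0 :=
    Real.cos_neg_of_pi_div_two_lt_of_lt hθ1 (by linarith)
  have hsinle : Real.sin θ ≤ 1 := Real.sin_le_one θ
  have h_key : -2 * Real.sin θ < Real.cos θ * Real.pi := (div_lt_div_iff₀ hπ hsinpos).mp hθ3
  have hc3 : Real.cos θ * Real.pi ≤ Real.cos θ * 3 := by
    nlinarith [mul_nonneg (neg_nonneg.mpr hcosneg.le) (by linarith : (0:ℝ) ≤ Real.pi - 3)]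
  have h3c : -2 * Real.sin θ < Real.cos θ * 3 := lt_of_lt_of_le h_key hc3
  -- sin θ > 1/2
  have hsinhalf : (1:ℝ)/2 < Real.sin θ := by
    have hpyth := Real.sin_sq_add_cos_sq θ
    have hA : 0 < 3 * Real.cos θ + 2 * Real.sin θ := by linarith
    have hB : 0 < 2 * Real.sin θ - 3 * Real.cos θ := by linarith
    nlinarith [mul_pos hA hB, sq_nonneg (2 * Real.sin θ - 1)]
  set R : ℝ := Real.pi / Real.sin θ with hRdef
  have hR0 : 0 < R := div_pos hπ hsinpos
  have hR1 : 1 ≤ R := by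
    rw [hRdef, le_div_iff₀ hsinpos]; nlinarith
  have hR2π : R < 2 * Real.pi := by
    rw [hRdef, div_lt_iff₀ hsinpos]; nlinarith
  -- the compact annulus
  set A : Set ℂ := Metric.closedBall (0:ℂ) R \ Metric.ball (0:ℂ) (1/2) with hAdef
  have hAcomp : IsCompact A := (isCompact_closedBall (0:ℂ) R).diff Metric.isOpen_ball
  have h1A : (1:ℂ) ∈ A := by
    simp only [hAdef, Set.mem_diff, Metric.mem_closedBall, Metric.mem_ball, Complex.dist_eq,
      sub_zero, map_one, norm_one]
    constructor
    · exact hR1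
    · norm_num
  have hcontF : Continuous (fun w : ℂ => ‖1 - Complex.exp (-w)‖) :=
    continuous_norm.comp
      (continuous_const.sub (Complex.continuous_exp.comp continuous_neg))
  have hcont : ContinuousOn (fun w : ℂ => ‖1 - Complex.exp (-w)‖) A :=
    hcontF.continuousOn
  obtain ⟨x₀, hx₀A, hmin⟩ := hAcomp.exists_isMinOn ⟨1, h1A⟩ hcont
  set m : ℝ := ‖1 - Complex.exp (-x₀)‖ with hmdef
  have hx₀mem : ‖x₀‖ ≤ R ∧ 1/2 ≤ ‖x₀‖ := by
    simp only [hAdef, Set.mem_diff, Metric.mem_closedBall, Metric.mem_ball, Complex.dist_eq,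
      sub_zero, not_lt] at hx₀A
    exact hx₀A
  have hm : 0 < m := by
    rcases lt_or_eq_of_le (norm_nonneg (1 - Complex.exp (-x₀))) with h | h
    · exact h
    · exfalso
      have hz : 1 - Complex.exp (-x₀) = 0 := norm_eq_zero.mp h.symm
      have hexp : Complex.exp (-x₀) = 1 := by
        have : Complex.exp (-x₀) = 1 - (1 - Complex.exp (-x₀)) := by ring
        rw [this, hz, sub_zero]
      obtain ⟨n, hn⟩ := Complex.exp_eq_one_iff.mp hexp
      have habs : ‖x₀‖ = |(n:ℝ)| * (2 * Real.pi) := by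
        have : ‖-x₀‖ = ‖(n:ℂ) * (2 * (Real.pi:ℂ) * Complex.I)‖ := by
          rw [hn]
        simpa [norm_mul, Complex.norm_intCast, Complex.norm_real, Complex.norm_I,
          abs_of_pos hπ] using this
      rcases eq_or_ne n 0 with h0 | h0
      · rw [h0] at habs
        simp at habs
        have := hx₀mem.2
        rw [habs] at this
        norm_num at this
      · have hge : (1:ℝ) ≤ |(n:ℝ)| := by
          exact_mod_cast Int.one_le_abs h0
        have : 2 * Real.pi ≤ ‖x₀‖ := by
          rw [habs]; nlinarith
        linarith [hx₀mem.1]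
  -- the max on the ball
  have hcont2 : ContinuousOn (fun w : ℂ => ‖1 - Complex.exp (-w)‖)
      (Metric.closedBall (0:ℂ) R) := hcontF.continuousOn
  obtain ⟨y₀, hy₀, hmax⟩ := (isCompact_closedBall (0:ℂ) R).exists_isMaxOn
    ⟨0, by simp [hR0.le]⟩ hcont2
  set M : ℝ := ‖1 - Complex.exp (-y₀)‖ with hMdef
  have hM0 : 0 ≤ M := norm_nonneg _
  set C₀ : ℝ := min (1/2) (m / R) with hC₀def
  set C₁ : ℝ := max 2 M with hC₁def
  have hC₀pos : 0 < C₀ := lt_min (by norm_num) (div_pos hm hR0)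
  have hC₁pos : 0 < C₁ := lt_of_lt_of_le (by norm_num) (le_max_left 2 M)
  -- key lower bound
  have key_low : ∀ u : ℂ, ‖u‖ ≤ R →
      C₀ * ‖u‖ ≤ ‖1 - Complex.exp (-u)‖ := by
    intro u hu
    by_cases h : ‖u‖ ≤ 1/2
    · have h1 : ‖-u‖ ≤ 1 := by rw [norm_neg]; linarith
      have h2 := Complex.norm_exp_sub_one_sub_id_le h1
      rw [norm_neg] at h2
      have h3 : ‖u‖ ≤ ‖Complex.exp (-u) - 1 - -u‖
          + ‖1 - Complex.exp (-u)‖ := by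
        have heq : (u : ℂ) = (Complex.exp (-u) - 1 - -u) + (1 - Complex.exp (-u)) := by ring
        calc ‖u‖ = ‖(Complex.exp (-u) - 1 - -u) + (1 - Complex.exp (-u))‖ := by
              rw [← heq]
          _ ≤ _ := norm_add_le _ _
      have h4 : ‖u‖ - ‖u‖ ^ 2 ≤ ‖1 - Complex.exp (-u)‖ := by
        linarith
      have h5 : C₀ * ‖u‖ ≤ (1/2) * ‖u‖ :=
        mul_le_mul_of_nonneg_right (min_le_left _ _) (norm_nonneg _)
      nlinarith [norm_nonneg u]
    · push_neg at h
      have huA : u ∈ A := by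
        simp only [hAdef, Set.mem_diff, Metric.mem_closedBall, Metric.mem_ball, Complex.dist_eq,
          sub_zero, not_lt]
        exact ⟨hu, h.le⟩
      have hmu : m ≤ ‖1 - Complex.exp (-u)‖ := hmin huA
      have : C₀ * ‖u‖ ≤ (m / R) * ‖u‖ :=
        mul_le_mul_of_nonneg_right (min_le_right _ _) (norm_nonneg _)
      have h6 : (m / R) * ‖u‖ ≤ (m / R) * R :=
        mul_le_mul_of_nonneg_left hu (div_pos hm hR0).le
      rw [div_mul_cancel₀ m hR0.ne'] at h6
      linarith
  -- key upper bound
  have key_up : ∀ u : ℂ, ‖u‖ ≤ R →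
      ‖1 - Complex.exp (-u)‖ ≤ C₁ * ‖u‖ := by
    intro u hu
    by_cases h : ‖u‖ ≤ 1
    · have h1 : ‖-u‖ ≤ 1 := by rw [norm_neg]; exact h
      have h2 := Complex.norm_exp_sub_one_le h1
      rw [norm_neg] at h2
      have h3 : ‖1 - Complex.exp (-u)‖ = ‖Complex.exp (-u) - 1‖ := by
        rw [← norm_neg, neg_sub]
      rw [h3]
      calc ‖Complex.exp (-u) - 1‖ ≤ 2 * ‖u‖ := h2
        _ ≤ C₁ * ‖u‖ :=
            mul_le_mul_of_nonneg_right (le_max_left _ _) (norm_nonneg _)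
    · push_neg at h
      have huB : u ∈ Metric.closedBall (0:ℂ) R := by
        simp [Metric.mem_closedBall, Complex.dist_eq, hu]
      have hMu : ‖1 - Complex.exp (-u)‖ ≤ M := hmax huB
      calc ‖1 - Complex.exp (-u)‖ ≤ M := hMu
        _ ≤ M * ‖u‖ := le_mul_of_one_le_right hM0 h.le
        _ ≤ C₁ * ‖u‖ :=
            mul_le_mul_of_nonneg_right (le_max_right _ _) (norm_nonneg _)
  refine ⟨C₀, hC₀pos, C₁, hC₁pos, ?_⟩
  intro τ hτ κ hκ hκle z hz
  have hzle : ‖z‖ ≤ Real.pi / (τ * Real.sin θ) := by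
    rcases hz with ⟨_, h, _⟩ | ⟨h, _⟩
    · exact h
    · rw [h]; exact hκle
  have habsw : ‖z * (τ:ℂ)‖ = ‖z‖ * τ := by
    rw [norm_mul, Complex.norm_real, Real.norm_eq_abs, abs_of_pos hτ]
  have hwR : ‖z * (τ:ℂ)‖ ≤ R := by
    rw [habsw]
    calc ‖z‖ * τ ≤ Real.pi / (τ * Real.sin θ) * τ :=
          mul_le_mul_of_nonneg_right hzle hτ.le
      _ = R := by rw [hRdef]; field_simp
  have habsdiv : ‖(1 - Complex.exp (-(z * τ))) / τ‖
      = ‖1 - Complex.exp (-(z * (τ:ℂ)))‖ / τ := by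
    rw [norm_div, Complex.norm_real, Real.norm_eq_abs, abs_of_pos hτ]
  constructor
  · rw [habsdiv, le_div_iff₀ hτ]
    have hk := key_low (z * (τ:ℂ)) hwR
    rw [habsw, ← mul_assoc] at hk
    exact hk
  · rw [habsdiv, div_le_iff₀ hτ]
    have hk := key_up (z * (τ:ℂ)) hwR
    rw [habsw, ← mul_assoc] at hk
    exact hk
end

section
/- Let θ ∈ (π/2, π) satisfy cos θ / sin θ > −2/π. Then there exists a constant C > 0, depending only on θ, such that for every τ > 0, every κ ∈ (0, π/(τ sin θ)], and every z ∈ Γ^τ_{θ,κ}: |(1 − e^{−zτ})/τ − z| ≤ C τ |z|². -/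
open Real Complex Set

/-- First-order error of the backward Euler symbol: `|δ_τ(e^{−zτ}) − z| ≤ Cτ|z|²`. -/
theorem delta_minus_z_bound
    (θ : ℝ) (hθ1 : Real.pi / 2 < θ) (hθ2 : θ < Real.pi)
    (hθ3 : Real.cos θ / Real.sin θ > -2 / Real.pi) :
    ∃ C > (0 : ℝ),
      ∀ τ : ℝ, 0 < τ → ∀ κ : ℝ, 0 < κ → κ ≤ Real.pi / (τ * Real.sin θ) →
      ∀ z ∈ GammaTau θ κ τ,
        ‖(1 - Complex.exp (-(z * τ))) / τ - z‖ ≤ C * τ * (‖z‖) ^ 2 := by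
  have hs : 0 < Real.sin θ :=
    Real.sin_pos_of_pos_of_lt_pi (lt_trans (by positivity) hθ1) hθ2
  set M := Real.pi / Real.sin θ with hM
  have hM0 : 0 < M := div_pos Real.pi_pos hs
  set C := max 1 (Real.exp M + 1 + M) with hC
  have hC1 : (1 : ℝ) ≤ C := le_max_left _ _
  refine ⟨C, lt_of_lt_of_le one_pos hC1, ?_⟩
  intro τ hτ κ hκ hκle z hz
  have hzle : ‖z‖ ≤ Real.pi / (τ * Real.sin θ) := by
    rcases hz with ⟨_, h, _⟩ | ⟨h, _⟩
    · exact h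
    · rw [h]; exact hκle
  set w := -(z * (τ : ℂ)) with hw
  have hwabs : ‖w‖ = ‖z‖ * τ := by
    simp [hw, map_mul, Complex.norm_real, abs_of_pos hτ]
  have hwM : ‖w‖ ≤ M := by
    rw [hwabs]
    calc ‖z‖ * τ ≤ Real.pi / (τ * Real.sin θ) * τ :=
          mul_le_mul_of_nonneg_right hzle hτ.le
      _ = M := by rw [hM]; field_simp
  have hrw : (1 - Complex.exp (-(z * τ))) / τ - z
      = -((Complex.exp w - 1 - w) / (τ : ℂ)) := by
    have hτ0 : (τ : ℂ) ≠ 0 := by exact_mod_cast hτ.ne'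
    rw [hw]
    field_simp
    ring
  have hkey : ‖Complex.exp w - 1 - w‖ ≤ C * (‖w‖) ^ 2 := by
    rcases le_or_gt (‖w‖) 1 with h1 | h1
    · calc ‖Complex.exp w - 1 - w‖ ≤ (‖w‖) ^ 2 :=
            Complex.norm_exp_sub_one_sub_id_le h1
        _ ≤ C * (‖w‖) ^ 2 := le_mul_of_one_le_left (by positivity) hC1
    · have h2 : ‖Complex.exp w - 1 - w‖
          ≤ ‖Complex.exp w‖ + 1 + ‖w‖ := by
        calc ‖Complex.exp w - 1 - w‖
            ≤ ‖Complex.exp w - 1‖ + ‖w‖ := by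
              simpa using norm_sub_le (Complex.exp w - 1) w
          _ ≤ ‖Complex.exp w‖ + 1 + ‖w‖ := by
              have := norm_sub_le (Complex.exp w) 1
              simpa using add_le_add_right (by simpa using this) (‖w‖)
      have h3 : ‖Complex.exp w‖ ≤ Real.exp M := by
        rw [Complex.norm_exp]
        exact Real.exp_le_exp.mpr (le_trans (Complex.re_le_norm w) hwM)
      have h4 : ‖Complex.exp w‖ + 1 + ‖w‖ ≤ C :=
        le_trans (by linarith [hwM]) (le_max_right 1 (Real.exp M + 1 + M))
      have h5 : (1 : ℝ) ≤ (‖w‖) ^ 2 := by nlinarith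
      calc ‖Complex.exp w - 1 - w‖ ≤ C := le_trans h2 h4
        _ ≤ C * (‖w‖) ^ 2 := le_mul_of_one_le_right (by linarith) h5
  rw [hrw, norm_neg, norm_div, Complex.norm_real, Real.norm_eq_abs, abs_of_pos hτ,
    div_le_iff₀ hτ]
  calc ‖Complex.exp w - 1 - w‖ ≤ C * (‖w‖) ^ 2 := hkey
    _ = C * τ * ‖z‖ ^ 2 * τ := by rw [hwabs]; ring
end

section
/- Let α ∈ (0, 1) and let θ ∈ (π/2, π) satisfy cos θ / sin θ > −2/π. Then there exists a constant C > 0, depending only on θ and α, such that for every τ > 0, every κ ∈ (0, π/(τ sin θ)], and every z ∈ Γ^τ_{θ,κ}: |((1 − e^{−zτ})/τ)^α − z^α| ≤ C τ |z|^{α+1}, where both α-th powers are principal-branch complex powers. -/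
open Real Complex Set

lemma sector_aux {θ : ℝ} (hθπ : θ ≤ Real.pi) (hcos : -1 < Real.sqrt 2 * Real.cos θ)
    (z u : ℂ) (hz : z ≠ 0) (harg : |z.arg| ≤ θ) (hu : ‖u - 1‖ ≤ 1/2) :
    z * u ∈ Complex.slitPlane := by
  rw [Complex.mem_slitPlane_iff]
  by_contra hc
  push_neg at hc
  obtain ⟨hre, him⟩ := hc
  set ζ := z * u with hζdef
  have hure : 1/2 ≤ u.re := by
    have h := (Complex.abs_re_le_norm (u - 1)).trans hu
    simp only [Complex.sub_re, Complex.one_re] at h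
    have := abs_le.mp h
    linarith [this.1]
  have huim : |u.im| ≤ 1/2 := by
    have h := (Complex.abs_im_le_norm (u - 1)).trans hu
    simpa using h
  have hu0 : u ≠ 0 := by
    intro h; rw [h] at hure; simp at hure; linarith
  have hζ0 : ζ ≠ 0 := mul_ne_zero hz hu0
  have hζre : ζ.re < 0 := by
    rcases lt_or_eq_of_le hre with h | h
    · exact h
    · exact absurd (by apply Complex.ext <;> simp [h.symm, him]) hζ0
  have hζreal : ζ = (ζ.re : ℂ) := Complex.ext rfl (by simp [him])
  have hca : Real.cos θ ≤ z.re / ‖z‖ := by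
    rw [← Complex.cos_arg hz, ← Real.cos_abs z.arg]
    exact Real.cos_le_cos_of_nonneg_of_le_pi (abs_nonneg _) hθπ harg
  have hza : 0 < ‖z‖ := norm_pos_iff.mpr hz
  have h5 : Real.cos θ * ‖z‖ ≤ z.re := by
    rw [div_eq_mul_inv] at hca
    calc Real.cos θ * ‖z‖ ≤ (z.re * (‖z‖)⁻¹) * ‖z‖ :=
          mul_le_mul_of_nonneg_right hca hza.le
      _ = z.re := by field_simp
  have habsu : 0 < ‖u‖ := norm_pos_iff.mpr hu0
  have hz_eq : z = ζ / u := by rw [hζdef, mul_div_cancel_right₀ _ hu0]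
  have hzre : z.re = ζ.re * u.re / Complex.normSq u := by
    rw [hz_eq, Complex.div_re, hζreal]; simp
  have e1 : ‖z‖ * ‖u‖ = -ζ.re := by
    rw [← norm_mul, ← hζdef, hζreal, Complex.norm_real, Real.norm_eq_abs, abs_of_neg hζre]; simp
  have hnsq : Complex.normSq u = ‖u‖ * ‖u‖ := (Complex.normSq_eq_norm_sq u).trans (sq _)
  have hnsqpos : 0 < Complex.normSq u := Complex.normSq_pos.mpr hu0
  have h8 : Real.cos θ * (-ζ.re) * ‖u‖ ≤ ζ.re * u.re := by
    have h7 := mul_le_mul_of_nonneg_right h5 hnsqpos.le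
    rw [hzre, div_mul_cancel₀ _ hnsqpos.ne'] at h7
    calc Real.cos θ * (-ζ.re) * ‖u‖
        = Real.cos θ * ‖z‖ * Complex.normSq u := by
          rw [hnsq, ← e1]; ring
      _ ≤ ζ.re * u.re := h7
  have huabs : ‖u‖ ≤ Real.sqrt 2 * u.re := by
    rw [Complex.norm_def, Complex.normSq_apply]
    have h1 : u.re * u.re + u.im * u.im ≤ 2 * (u.re * u.re) := by
      nlinarith [abs_le.mp huim, hure]
    calc Real.sqrt (u.re * u.re + u.im * u.im) ≤ Real.sqrt (2 * (u.re * u.re)) :=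
          Real.sqrt_le_sqrt h1
      _ = Real.sqrt 2 * u.re := by
          rw [Real.sqrt_mul (by norm_num), Real.sqrt_mul_self (by linarith : (0:ℝ) ≤ u.re)]
  set r := -ζ.re with hr'
  have hr : 0 < r := by simp [hr']; linarith
  have hurpos : 0 < u.re := by linarith
  rcases le_or_gt 0 (Real.cos θ) with hcpos | hcneg
  · nlinarith [h8, mul_nonneg (mul_nonneg hcpos hr.le) habsu.le, mul_pos hr hurpos]
  · have h9 : 0 ≤ (-Real.cos θ) * r * (Real.sqrt 2 * u.re - ‖u‖) :=
      mul_nonneg (mul_nonneg (by linarith) hr.le) (by linarith)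
    nlinarith [h8, h9, mul_pos hr hurpos, hcos]

set_option maxHeartbeats 1000000 in
/-- Error of the backward Euler symbol raised to the power `α`:
`|δ_τ(e^{−zτ})^α − z^α| ≤ Cτ|z|^{α+1}` on the truncated contour, where the powers are
principal-branch complex powers. -/
theorem delta_pow_minus_z_pow_bound
    (α : ℝ) (hα0 : 0 < α) (hα1 : α < 1)
    (θ : ℝ) (hθ1 : Real.pi / 2 < θ) (hθ2 : θ < Real.pi)
    (hθ3 : Real.cos θ / Real.sin θ > -2 / Real.pi) :
    ∃ C > (0 : ℝ),
      ∀ τ : ℝ, 0 < τ → ∀ κ : ℝ, 0 < κ → κ ≤ Real.pi / (τ * Real.sin θ) →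
      ∀ z ∈ GammaTau θ κ τ,
        ‖((1 - Complex.exp (-(z * τ))) / τ) ^ (α : ℂ) - z ^ (α : ℂ)‖ ≤
          C * τ * ‖z‖ ^ (α + 1) := by
  have hπ := Real.pi_pos
  have hsin : 0 < Real.sin θ := Real.sin_pos_of_pos_of_lt_pi (by linarith) hθ2
  have hsin1 : Real.sin θ ≤ 1 := Real.sin_le_one θ
  have hcos2 : (-2) / Real.pi < Real.cos θ := by
    have h1 : (-2) / Real.pi * Real.sin θ < Real.cos θ := (lt_div_iff₀ hsin).mp hθ3
    have h2 : (-2) / Real.pi ≤ (-2) / Real.pi * Real.sin θ :=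
      le_mul_of_le_one_right (div_nonpos_iff.mpr (Or.inr ⟨by norm_num, hπ.le⟩)) hsin1
    linarith
  have hs2 : (0:ℝ) < Real.sqrt 2 := by positivity
  have hs2' : Real.sqrt 2 < 3/2 := (Real.sqrt_lt' (by norm_num)).mpr (by norm_num)
  have hcos : -1 < Real.sqrt 2 * Real.cos θ := by
    have hπ3 : (3:ℝ) < Real.pi := Real.pi_gt_three
    have hcos2' : (-2:ℝ) < Real.pi * Real.cos θ := by
      have h := mul_lt_mul_of_pos_left hcos2 hπ
      rwa [mul_comm Real.pi ((-2)/Real.pi), div_mul_cancel₀ _ hπ.ne'] at h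
    nlinarith [hcos2', hπ3, hs2, hs2', hπ]
  set R := Real.pi / Real.sin θ with hRdef
  have hRpos : 0 < R := div_pos hπ hsin
  set E := Real.exp R with hEdef
  have hE1 : 1 ≤ E := Real.one_le_exp hRpos.le
  refine ⟨2 + 2 * (2 * (1 + E) + 1), by positivity, ?_⟩
  intro τ hτ κ hκ hκle z hz
  simp only [GammaTau, Set.mem_setOf_eq] at hz
  have hzabs_le : ‖z‖ ≤ Real.pi / (τ * Real.sin θ) := by
    rcases hz with ⟨_, h, _⟩ | ⟨h, _⟩
    · exact h
    · exact h.le.trans hκle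
  have hzpos : 0 < ‖z‖ := by
    rcases hz with ⟨h, _, _⟩ | ⟨h, _⟩
    · exact lt_of_lt_of_le hκ h
    · rw [h]; exact hκ
  have harg : |z.arg| ≤ θ := by
    rcases hz with ⟨_, _, h⟩ | ⟨_, h⟩
    · exact h.le
    · exact h
  have hz0 : z ≠ 0 := by
    intro h; rw [h] at hzpos; simp at hzpos
  have hwR : τ * ‖z‖ ≤ R := by
    have h := mul_le_mul_of_nonneg_left hzabs_le hτ.le
    have e : τ * (Real.pi / (τ * Real.sin θ)) = R := by
      rw [hRdef]; field_simp
    rw [e] at h; exact h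
  have hτC : (τ:ℂ) ≠ 0 := Complex.ofReal_ne_zero.mpr hτ.ne'
  set w := z * (τ:ℂ) with hwdef
  have hwabs : ‖w‖ = τ * ‖z‖ := by
    rw [hwdef, norm_mul, Complex.norm_real, Real.norm_eq_abs, abs_of_pos hτ]; ring
  set δ := (1 - Complex.exp (-w)) / (τ:ℂ) with hδdef
  have hδz : δ - z = (1 - Complex.exp (-w) - w) / (τ:ℂ) := by
    rw [hδdef, hwdef]; field_simp
  have hzα : ‖z ^ (α:ℂ)‖ = ‖z‖ ^ α := Complex.norm_cpow_real z α
  have hid : ‖z‖ ^ (α:ℝ) * ‖z‖ = ‖z‖ ^ (α+1) := by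
    rw [Real.rpow_add hzpos, Real.rpow_one]
  rcases le_or_gt (τ * ‖z‖) (1/2) with hsmall | hbig
  · -- MVT case
    have hdz : ‖δ - z‖ ≤ τ * ‖z‖ ^ 2 := by
      rw [hδz, norm_div, Complex.norm_real, Real.norm_eq_abs, abs_of_pos hτ, div_le_iff₀ hτ]
      have hexp := Complex.norm_exp_sub_one_sub_id_le (x := -w)
        (by rw [norm_neg, hwabs]; linarith)
      calc ‖1 - Complex.exp (-w) - w‖
          = ‖Complex.exp (-w) - 1 - -w‖ := by
            rw [show (1 - Complex.exp (-w) - w) = -(Complex.exp (-w) - 1 - -w) by ring,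
              norm_neg]
        _ ≤ ‖-w‖ ^ 2 := hexp
        _ = (τ * ‖z‖)^2 := by rw [norm_neg, hwabs]
        _ = τ * ‖z‖ ^ 2 * τ := by ring
    have hdz2 : ‖δ - z‖ ≤ ‖z‖ / 2 := by
      calc ‖δ - z‖ ≤ τ * ‖z‖ ^ 2 := hdz
        _ = (τ * ‖z‖) * ‖z‖ := by ring
        _ ≤ (1/2) * ‖z‖ := mul_le_mul_of_nonneg_right hsmall hzpos.le
        _ = ‖z‖ / 2 := by ring
    have hseg : ∀ ζ ∈ segment ℝ z δ,
        ‖z‖ / 2 ≤ ‖ζ‖ ∧ ζ ∈ Complex.slitPlane := by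
      intro ζ hζ
      obtain ⟨a, b, ha, hb, hab, habζ⟩ := hζ
      have hb1 : b ≤ 1 := by linarith
      have hζz : ζ - z = b • (δ - z) := by
        rw [← habζ]
        have ha' : a = 1 - b := by linarith
        rw [ha']
        module
      have hζzabs : ‖ζ - z‖ ≤ ‖z‖ / 2 := by
        have e : ‖ζ - z‖ = |b| * ‖δ - z‖ := by
          rw [hζz, norm_smul, Real.norm_eq_abs]
        rw [e, _root_.abs_of_nonneg hb]
        calc b * ‖δ - z‖ ≤ 1 * (‖z‖ / 2) :=
              mul_le_mul hb1 hdz2 (norm_nonneg _) (by norm_num)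
          _ = ‖z‖ / 2 := by ring
      have h1 : ‖z‖ / 2 ≤ ‖ζ‖ := by
        have hn := abs_norm_sub_norm_le z ζ
        rw [norm_sub_rev] at hn
        have := abs_le.mp hn
        linarith [this.1, hζzabs]
      refine ⟨h1, ?_⟩
      have hζeq : ζ = z * (1 + (ζ - z) / z) := by
        field_simp; ring
      rw [hζeq]
      apply sector_aux hθ2.le hcos z _ hz0 harg
      rw [add_sub_cancel_left, norm_div, div_le_iff₀ hzpos]
      linarith [hζzabs]
    have hbound : ∀ ζ ∈ segment ℝ z δ,
        ‖(α:ℂ) * ζ ^ ((α:ℂ) - 1)‖ ≤ 2 * ‖z‖ ^ (α - 1) := by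
      intro ζ hζ
      obtain ⟨h1, _⟩ := hseg ζ hζ
      have e : ‖(α:ℂ) * ζ ^ ((α:ℂ) - 1)‖ = α * ‖ζ‖ ^ (α - 1) := by
        rw [norm_mul, Complex.norm_real, Real.norm_eq_abs, abs_of_pos hα0]
        congr 1
        have e2 : ((α:ℂ) - 1) = ((α - 1 : ℝ) : ℂ) := by push_cast; ring
        rw [e2, Complex.norm_cpow_real]
      rw [e]
      have h2 : ‖ζ‖ ^ (α-1) ≤ (‖z‖ / 2) ^ (α-1) :=
        Real.rpow_le_rpow_of_nonpos (by positivity) h1 (by linarith)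
      have h3 : (‖z‖ / 2) ^ (α-1) ≤ 2 * ‖z‖ ^ (α-1) := by
        rw [Real.div_rpow hzpos.le (by norm_num), div_le_iff₀ (Real.rpow_pos_of_pos two_pos _)]
        have h4 : (2:ℝ)^(-1:ℝ) ≤ (2:ℝ)^(α-1) :=
          Real.rpow_le_rpow_of_exponent_le one_le_two (by linarith)
        rw [Real.rpow_neg_one] at h4
        nlinarith [Real.rpow_pos_of_pos hzpos (α-1), Real.rpow_pos_of_pos two_pos (α-1)]
      calc α * ‖ζ‖ ^ (α-1) ≤ 1 * ((‖z‖ / 2) ^ (α-1)) :=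
            mul_le_mul hα1.le h2 (by positivity) (by norm_num)
        _ ≤ 2 * ‖z‖ ^ (α-1) := by rw [one_mul]; exact h3
    have hderiv : ∀ ζ ∈ segment ℝ z δ,
        HasDerivWithinAt (fun y : ℂ => y ^ (α:ℂ)) ((α:ℂ) * ζ ^ ((α:ℂ) - 1)) (segment ℝ z δ) ζ :=
      fun ζ hζ =>
        ((Complex.hasStrictDerivAt_cpow_const (hseg ζ hζ).2).hasDerivAt).hasDerivWithinAt
    have hmvt := (convex_segment z δ).norm_image_sub_le_of_norm_hasDerivWithin_le
      hderiv hbound (left_mem_segment ℝ z δ) (right_mem_segment ℝ z δ)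
    have hid2 : ‖z‖ ^ (α-1) * ‖z‖ ^ 2 = ‖z‖ ^ (α+1) := by
      rw [← Real.rpow_natCast (‖z‖) 2, ← Real.rpow_add hzpos]
      congr 1
      push_cast
      ring
    calc ‖δ ^ (α:ℂ) - z ^ (α:ℂ)‖
        ≤ 2 * ‖z‖ ^ (α-1) * ‖δ - z‖ := by
          simpa using hmvt
      _ ≤ 2 * ‖z‖ ^ (α-1) * (τ * ‖z‖ ^ 2) :=
          mul_le_mul_of_nonneg_left hdz (by positivity)
      _ = 2 * τ * (‖z‖ ^ (α-1) * ‖z‖ ^ 2) := by ring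
      _ = 2 * τ * ‖z‖ ^ (α+1) := by rw [hid2]
      _ ≤ (2 + 2*(2*(1+E)+1)) * τ * ‖z‖ ^ (α+1) := by
          have hnn : (0:ℝ) ≤ τ * ‖z‖ ^ (α+1) := by positivity
          nlinarith [hE1, hnn]
  · -- crude case
    have hδα : ‖δ ^ (α:ℂ)‖ = ‖δ‖ ^ α := Complex.norm_cpow_real δ α
    have hre : (-w).re ≤ R := by
      calc (-w).re ≤ ‖-w‖ := Complex.re_le_norm _
        _ = τ * ‖z‖ := by rw [norm_neg, hwabs]
        _ ≤ R := hwR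
    have h1 : ‖1 - Complex.exp (-w)‖ ≤ 1 + E := by
      calc ‖1 - Complex.exp (-w)‖
          ≤ ‖(1:ℂ)‖ + ‖Complex.exp (-w)‖ := by
            simpa using norm_sub_le (1:ℂ) (Complex.exp (-w))
        _ ≤ 1 + E := by
            rw [norm_one, Complex.norm_exp, hEdef]
            exact add_le_add_right (Real.exp_le_exp.mpr hre) 1
    have hδbound : ‖δ‖ ≤ 2 * (1 + E) * ‖z‖ := by
      rw [hδdef, norm_div, Complex.norm_real, Real.norm_eq_abs, abs_of_pos hτ, div_le_iff₀ hτ]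
      calc ‖1 - Complex.exp (-w)‖ ≤ 1 + E := h1
        _ ≤ 2 * (1 + E) * ‖z‖ * τ := by
            nlinarith [mul_pos (show (0:ℝ) < 1 + E by linarith)
              (show (0:ℝ) < 2 * (τ * ‖z‖) - 1 by linarith)]
    have hzαpos : 0 < ‖z‖ ^ α := Real.rpow_pos_of_pos hzpos α
    have hδα_le : ‖δ‖ ^ α ≤ 2*(1+E) * (‖z‖ ^ α) := by
      calc ‖δ‖ ^ α ≤ (2*(1+E) * ‖z‖) ^ α :=
            Real.rpow_le_rpow (norm_nonneg _) hδbound hα0.le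
        _ = (2*(1+E)) ^ α * ‖z‖ ^ α := Real.mul_rpow (by positivity) hzpos.le
        _ ≤ 2*(1+E) * ‖z‖ ^ α := by
            have h2 : (2*(1+E):ℝ) ^ α ≤ (2*(1+E):ℝ) ^ (1:ℝ) :=
              Real.rpow_le_rpow_of_exponent_le (by linarith) hα1.le
            rw [Real.rpow_one] at h2
            exact mul_le_mul_of_nonneg_right h2 (Real.rpow_nonneg hzpos.le _)
    calc ‖δ ^ (α:ℂ) - z ^ (α:ℂ)‖
        ≤ ‖δ ^ (α:ℂ)‖ + ‖z ^ (α:ℂ)‖ := by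
          simpa using norm_sub_le (δ ^ (α:ℂ)) (z ^ (α:ℂ))
      _ = ‖δ‖ ^ α + ‖z‖ ^ α := by rw [hδα, hzα]
      _ ≤ (2*(1+E)+1) * (‖z‖ ^ α) := by linarith [hδα_le]
      _ ≤ (2 + 2*(2*(1+E)+1)) * τ * ‖z‖ ^ (α+1) := by
          rw [← hid]
          have hh : ‖z‖ ^ α ≤ 2*(τ * (‖z‖ ^ α * ‖z‖)) := by
            nlinarith [mul_le_mul_of_nonneg_left hbig.le hzαpos.le]
          have hh2 := mul_le_mul_of_nonneg_left hh (show (0:ℝ) ≤ 2*(1+E)+1 by linarith)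
          nlinarith [hh2, mul_nonneg (mul_nonneg hτ.le hzαpos.le) hzpos.le]
end

section
/- Let θ ∈ (π/2, π) and b ∈ ℝ. Then there exists a constant C > 0, depending only on θ and b, such that for every t > 0 the weighted arc-length integral of |e^{zt}||z|^b over the contour Γ_{θ,1/t}, namely 2 ∫_{1/t}^{∞} e^{r t cos θ} r^b dr + t^{−(1+b)} ∫_{−θ}^{θ} e^{cos ψ} dψ, is finite and bounded by C t^{−(1+b)}. -/
open Real Set MeasureTheory intervalIntegral

private lemma aux_integrable {c b a : ℝ} (hc : c < 0) (ha : 0 < a) :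
    IntegrableOn (fun r : ℝ => Real.exp (r * c) * r ^ b) (Ioi a) := by
  have hd : 0 < -c := by linarith
  have h1 : IntegrableOn (fun r : ℝ => r ^ max b 0 * Real.exp (-(-c) * r)) (Ioi a) := by
    have := integrableOn_rpow_mul_exp_neg_mul_rpow
      (s := max b 0) (p := 1) (b := -c) (lt_of_lt_of_le neg_one_lt_zero (le_max_right b 0)) one_pos hd
    simp only [Real.rpow_one] at this
    exact this.mono_set (Ioi_subset_Ioi ha.le)
  have h2 : IntegrableOn (fun r : ℝ => a ^ min b 0 * Real.exp (-(-c) * r)) (Ioi a) :=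
    (exp_neg_integrableOn_Ioi a hd).const_mul _
  refine ((h1.add h2).mono' ?_ ?_)
  · refine (ContinuousOn.mul (Real.continuous_exp.comp (continuous_mul_right c)).continuousOn
      (ContinuousOn.rpow_const continuousOn_id fun x hx => Or.inl ?_)).aestronglyMeasurable
      measurableSet_Ioi
    exact (lt_of_lt_of_le ha (le_of_lt hx)).ne'
  · filter_upwards [ae_restrict_mem measurableSet_Ioi] with r hr
    have hra : a < r := hr
    have hr0 : 0 < r := ha.trans hra
    have hexp : 0 < Real.exp (r * c) := Real.exp_pos _
    have hkey : r ^ b ≤ r ^ max b 0 + a ^ min b 0 := by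
      rcases le_total r 1 with h | h
      · have h1 : r ^ b ≤ r ^ min b 0 :=
          Real.rpow_le_rpow_of_exponent_ge hr0 h (min_le_left b 0)
        have h2 : r ^ min b 0 ≤ a ^ min b 0 :=
          Real.rpow_le_rpow_of_nonpos ha hra.le (min_le_right b 0)
        have h3 : (0:ℝ) ≤ r ^ max b 0 := Real.rpow_nonneg hr0.le _
        linarith
      · have h1 : r ^ b ≤ r ^ max b 0 :=
          Real.rpow_le_rpow_of_exponent_le h (le_max_left b 0)
        have h2 : (0:ℝ) ≤ a ^ min b 0 := Real.rpow_nonneg ha.le _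
        linarith
    have hrb : (0:ℝ) ≤ r ^ b := Real.rpow_nonneg hr0.le _
    rw [Real.norm_eq_abs, abs_of_nonneg (by positivity)]
    have : Real.exp (-(-c) * r) = Real.exp (r * c) := by rw [neg_neg, mul_comm]
    simp only [Pi.add_apply, this]
    nlinarith [mul_le_mul_of_nonneg_left hkey hexp.le]

/-- The weighted arc-length integral of `|e^{zt}||z|^b` over the contour `Γ_{θ,1/t}`
(the two rays contribute `2∫_{1/t}^∞ e^{rt cos θ} r^b dr` and the arc contributes
`t^{−(1+b)} ∫_{−θ}^{θ} e^{cos ψ} dψ`) is finite and bounded by `C t^{−(1+b)}`. -/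
theorem contour_weight_integral_bound
    (θ b : ℝ) (hθ1 : Real.pi / 2 < θ) (hθ2 : θ < Real.pi) :
    ∃ C > (0 : ℝ), ∀ t : ℝ, 0 < t →
      IntegrableOn (fun r : ℝ => Real.exp (r * t * Real.cos θ) * r ^ b) (Set.Ici (1 / t)) ∧
      2 * (∫ r in Set.Ici (1 / t), Real.exp (r * t * Real.cos θ) * r ^ b) +
          t ^ (-(1 + b)) * (∫ ψ in (-θ)..θ, Real.exp (Real.cos ψ)) ≤
        C * t ^ (-(1 + b)) := by
  have hc : Real.cos θ < 0 :=
    Real.cos_neg_of_pi_div_two_lt_of_lt hθ1 (by linarith [Real.pi_pos])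
  set c := Real.cos θ with hcdef
  set K := ∫ s in Ioi (1:ℝ), Real.exp (s * c) * s ^ b with hK
  have hK0 : 0 ≤ K := by
    refine setIntegral_nonneg measurableSet_Ioi fun x hx => ?_
    have : (0:ℝ) < x := lt_trans one_pos hx
    positivity
  set I := ∫ ψ in (-θ)..θ, Real.exp (Real.cos ψ) with hI
  have hI0 : 0 ≤ I := by
    refine intervalIntegral.integral_nonneg (by linarith [Real.pi_pos]) fun ψ _ => (Real.exp_pos _).le
  refine ⟨2 * K + I + 1, by positivity, fun t ht => ?_⟩
  have htinv : 0 < 1 / t := by positivity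
  have hint : IntegrableOn (fun r : ℝ => Real.exp (r * t * c) * r ^ b) (Ioi (1 / t)) := by
    have := aux_integrable (c := t * c) (b := b) (a := 1/t) (by nlinarith) htinv
    simpa [mul_assoc] using this
  have hintIci : IntegrableOn (fun r : ℝ => Real.exp (r * t * c) * r ^ b) (Ici (1 / t)) :=
    (integrableOn_Ici_iff_integrableOn_Ioi).mpr hint
  refine ⟨hintIci, ?_⟩
  have hval : (∫ r in Ici (1 / t), Real.exp (r * t * c) * r ^ b) = t ^ (-(1 + b)) * K := by
    rw [integral_Ici_eq_integral_Ioi]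
    have hsub := MeasureTheory.integral_comp_mul_left_Ioi
      (fun s => Real.exp (s * c) * s ^ b) (1 / t) ht
    rw [mul_one_div_cancel ht.ne'] at hsub
    have hcongr : ∫ x in Ioi (1 / t), Real.exp (t * x * c) * (t * x) ^ b
        = ∫ x in Ioi (1 / t), t ^ b * (Real.exp (x * t * c) * x ^ b) := by
      refine setIntegral_congr_fun measurableSet_Ioi fun x hx => ?_
      have hx0 : 0 < x := lt_trans htinv hx
      rw [Real.mul_rpow ht.le hx0.le]
      ring
    rw [hcongr, MeasureTheory.integral_const_mul] at hsub
    have ht1b : t ^ (-(1 + b)) = t ^ (-b) * t⁻¹ := by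
      rw [← Real.rpow_neg_one t, ← Real.rpow_add ht]
      ring_nf
    have htb : t ^ b ≠ 0 := (Real.rpow_pos_of_pos ht b).ne'
    have : (∫ x in Ioi (1 / t), Real.exp (x * t * c) * x ^ b) = (t ^ b)⁻¹ * (t⁻¹ * K) := by
      rw [smul_eq_mul] at hsub
      have h2 := congrArg (fun y => (t ^ b)⁻¹ * y) hsub
      rw [← mul_assoc, inv_mul_cancel₀ htb, one_mul] at h2
      rw [h2]
    rw [this, ht1b, ← Real.rpow_neg_one t, ← Real.rpow_neg ht.le]
    ring
  rw [hval]
  have htp : 0 < t ^ (-(1 + b)) := Real.rpow_pos_of_pos ht _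
  nlinarith
end

section
/- Let H ∈ (1/2, 1) and t, u ≥ 0. Then H(2H−1) ∫₀ᵗ ∫₀ᵘ |s − r|^{2H−2} dr ds = (t^{2H} + u^{2H} − |t − u|^{2H})/2, where the (improper) double integral is finite. -/
open Real Set MeasureTheory

namespace FbmCovAux

/-- Signed power: `F β x = (x⁺)^β - (x⁻)^β`, an antiderivative of `|x|^(β-1)` up to `1/β`. -/
noncomputable def F (β x : ℝ) : ℝ := max x 0 ^ β - max (-x) 0 ^ β

lemma F_cont {β : ℝ} (hβ : 0 < β) : Continuous (F β) := by
  apply Continuous.sub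
  · exact (continuous_id.max continuous_const).rpow_const (fun x => Or.inr hβ.le)
  · exact (continuous_neg.max continuous_const).rpow_const (fun x => Or.inr hβ.le)

lemma intInt_abs {β : ℝ} (hβ0 : 0 < β) (c : ℝ) :
    IntervalIntegrable (fun x => |x| ^ (β - 1)) volume 0 c := by
  have key : ∀ d : ℝ, 0 ≤ d → IntervalIntegrable (fun x => |x| ^ (β - 1)) volume 0 d := by
    intro d hd
    have h1 : IntervalIntegrable (fun x : ℝ => x ^ (β - 1)) volume 0 d :=
      intervalIntegral.intervalIntegrable_rpow' (by linarith)
    apply h1.congr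
    rw [uIoc_of_le hd]
    intro x hx
    simp only [abs_of_pos hx.1]
  rcases le_or_gt 0 c with h | h
  · exact key c h
  · have h1 := key (-c) (by linarith)
    have h2 := (IntervalIntegrable.iff_comp_neg (by simp)).mp h1
    simpa using h2

lemma intInt_abs_all {β : ℝ} (hβ0 : 0 < β) (a b : ℝ) :
    IntervalIntegrable (fun x => |x| ^ (β - 1)) volume a b :=
  ((intInt_abs hβ0 a).symm).trans (intInt_abs hβ0 b)

lemma integral_abs_zero {β : ℝ} (hβ0 : 0 < β) (c : ℝ) :
    ∫ x in (0:ℝ)..c, |x| ^ (β - 1) = F β c / β := by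
  have hβ : β ≠ 0 := hβ0.ne'
  have hb1 : β - 1 + 1 = β := by ring
  have key : ∀ d : ℝ, 0 ≤ d → ∫ x in (0:ℝ)..d, |x| ^ (β - 1) = d ^ β / β := by
    intro d hd
    have heq : EqOn (fun x : ℝ => |x| ^ (β - 1)) (fun x : ℝ => x ^ (β - 1)) (uIcc 0 d) := by
      intro x hx
      rw [uIcc_of_le hd] at hx
      simp [abs_of_nonneg hx.1]
    rw [intervalIntegral.integral_congr heq, integral_rpow (Or.inl (by linarith)), hb1,
      Real.zero_rpow hβ, sub_zero]
  rcases le_or_gt 0 c with h | h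
  · rw [key c h]
    have h1 : max c 0 = c := max_eq_left h
    have h2 : max (-c) 0 = 0 := max_eq_right (by linarith)
    rw [F, h1, h2, Real.zero_rpow hβ, sub_zero]
  · have hcn := intervalIntegral.integral_comp_neg (a := (0:ℝ)) (b := c)
      (fun x : ℝ => |x| ^ (β - 1))
    simp only [abs_neg, neg_zero] at hcn
    rw [hcn, intervalIntegral.integral_symm, key (-c) (by linarith)]
    have h1 : max c 0 = 0 := max_eq_right h.le
    have h2 : max (-c) 0 = -c := max_eq_left (by linarith)
    rw [F, h1, h2, Real.zero_rpow hβ, zero_sub, neg_div]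

lemma integral_abs {β : ℝ} (hβ0 : 0 < β) (a b : ℝ) :
    ∫ x in a..b, |x| ^ (β - 1) = (F β b - F β a) / β := by
  have hadd := intervalIntegral.integral_add_adjacent_intervals
    (intInt_abs hβ0 a).symm (intInt_abs hβ0 b)
  have ha : ∫ x in a..(0:ℝ), |x| ^ (β - 1) = -(F β a / β) := by
    rw [intervalIntegral.integral_symm, integral_abs_zero hβ0]
  rw [ha, integral_abs_zero hβ0] at hadd
  rw [← hadd]; ring

lemma integral_F_zero {β : ℝ} (hβ0 : 0 < β) (c : ℝ) :
    ∫ x in (0:ℝ)..c, F β x = |c| ^ (β + 1) / (β + 1) := by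
  have hβ : β ≠ 0 := hβ0.ne'
  have key : ∀ d : ℝ, 0 ≤ d → ∫ x in (0:ℝ)..d, F β x = d ^ (β + 1) / (β + 1) := by
    intro d hd
    have heq : EqOn (F β) (fun x : ℝ => x ^ β) (uIcc 0 d) := by
      intro x hx
      rw [uIcc_of_le hd] at hx
      have h1 : max x 0 = x := max_eq_left hx.1
      have h2 : max (-x) 0 = 0 := max_eq_right (by linarith [hx.1])
      simp [F, h1, h2, Real.zero_rpow hβ]
    rw [intervalIntegral.integral_congr heq, integral_rpow (Or.inl (by linarith)),
      Real.zero_rpow (by linarith : β + 1 ≠ 0), sub_zero]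
  rcases le_or_gt 0 c with h | h
  · rw [key c h, abs_of_nonneg h]
  · have heq : EqOn (F β) (fun x : ℝ => -((-x) ^ β)) (uIcc 0 c) := by
      intro x hx
      rw [uIcc_of_ge h.le] at hx
      have h1 : max x 0 = 0 := max_eq_right hx.2
      have h2 : max (-x) 0 = -x := max_eq_left (by linarith [hx.2])
      simp [F, h1, h2, Real.zero_rpow hβ]
    rw [intervalIntegral.integral_congr heq, intervalIntegral.integral_neg]
    have hcn := intervalIntegral.integral_comp_neg (a := (0:ℝ)) (b := c)
      (fun x : ℝ => x ^ β)
    rw [hcn, neg_zero, intervalIntegral.integral_symm, integral_rpow (Or.inl (by linarith)),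
      Real.zero_rpow (by linarith : β + 1 ≠ 0), sub_zero, abs_of_neg h]
    ring

lemma integral_F {β : ℝ} (hβ0 : 0 < β) (a b : ℝ) :
    ∫ x in a..b, F β x = (|b| ^ (β + 1) - |a| ^ (β + 1)) / (β + 1) := by
  have hadd := intervalIntegral.integral_add_adjacent_intervals
    (((F_cont hβ0).intervalIntegrable (μ := volume) a 0)) ((F_cont hβ0).intervalIntegrable (μ := volume) 0 b)
  have ha : ∫ x in a..(0:ℝ), F β x = -(|a| ^ (β + 1) / (β + 1)) := by
    rw [intervalIntegral.integral_symm, integral_F_zero hβ0]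
  rw [ha, integral_F_zero hβ0] at hadd
  rw [← hadd]; ring

lemma inner_intInt {β : ℝ} (hβ0 : 0 < β) (s u : ℝ) :
    IntervalIntegrable (fun r => |s - r| ^ (β - 1)) volume 0 u := by
  have h := (intInt_abs_all hβ0 s (s - u)).comp_sub_left s
  simpa using h

lemma inner_integral {β : ℝ} (hβ0 : 0 < β) (s u : ℝ) (hu : 0 ≤ u) :
    ∫ r in Ioc 0 u, |s - r| ^ (β - 1) = (F β s - F β (s - u)) / β := by
  rw [← intervalIntegral.integral_of_le hu]
  have h := intervalIntegral.integral_comp_sub_left (a := (0:ℝ)) (b := u)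
    (fun x : ℝ => |x| ^ (β - 1)) s
  rw [h, sub_zero, integral_abs hβ0]

end FbmCovAux

/-- The fBm covariance identity: for `H ∈ (1/2,1)`,
`H(2H−1) ∫₀ᵗ∫₀ᵘ |s−r|^{2H−2} dr ds = (t^{2H} + u^{2H} − |t−u|^{2H})/2`,
the double integral being finite. -/
theorem fbm_covariance_kernel_integral
    (H : ℝ) (hH1 : 1 / 2 < H) (hH2 : H < 1)
    (t u : ℝ) (ht : 0 ≤ t) (hu : 0 ≤ u) :
    IntegrableOn (fun p : ℝ × ℝ => |p.1 - p.2| ^ (2 * H - 2))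
      ((Set.Ioc 0 t) ×ˢ (Set.Ioc 0 u)) ∧
    H * (2 * H - 1) *
        ∫ p in (Set.Ioc 0 t) ×ˢ (Set.Ioc 0 u), |p.1 - p.2| ^ (2 * H - 2) =
      (t ^ (2 * H) + u ^ (2 * H) - |t - u| ^ (2 * H)) / 2 := by
  open FbmCovAux in
  set β : ℝ := 2 * H - 1 with hβ
  have hβ0 : 0 < β := by rw [hβ]; linarith
  have hβ1 : β + 1 ≠ 0 := by rw [hβ]; linarith
  have hexp : 2 * H - 2 = β - 1 := by rw [hβ]; ring
  have hexp2 : 2 * H = β + 1 := by rw [hβ]; ring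
  simp only [hexp]
  simp only [hexp2]
  -- measure rewriting
  have hrestr : (volume : Measure (ℝ × ℝ)).restrict ((Set.Ioc 0 t) ×ˢ (Set.Ioc 0 u))
      = (volume.restrict (Ioc 0 t)).prod (volume.restrict (Ioc 0 u)) := by
    rw [Measure.volume_eq_prod, Measure.prod_restrict]
  have hmeas : AEStronglyMeasurable (fun p : ℝ × ℝ => |p.1 - p.2| ^ (β - 1))
      ((volume.restrict (Ioc 0 t)).prod (volume.restrict (Ioc 0 u))) :=
    (((measurable_fst.sub measurable_snd).abs).pow measurable_const).aestronglyMeasurable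
  -- inner integrability
  have hinner : ∀ s : ℝ, IntegrableOn (fun r => |s - r| ^ (β - 1)) (Ioc 0 u) volume :=
    fun s => (intervalIntegrable_iff_integrableOn_Ioc_of_le hu).mp (inner_intInt hβ0 s u)
  -- value of inner integral with norms
  have hnorm : ∀ s : ℝ, (∫ r in Ioc 0 u, ‖|s - r| ^ (β - 1)‖)
      = (F β s - F β (s - u)) / β := by
    intro s
    rw [← inner_integral hβ0 s u hu]
    refine setIntegral_congr_fun measurableSet_Ioc fun r _ => ?_
    rw [Real.norm_eq_abs, abs_of_nonneg (Real.rpow_nonneg (abs_nonneg _) _)]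
  -- the outer function is continuous
  have hFc : Continuous (fun s : ℝ => (F β s - F β (s - u)) / β) :=
    (((F_cont hβ0).sub ((F_cont hβ0).comp (continuous_id.sub continuous_const))).div_const β)
  have hint : Integrable (fun p : ℝ × ℝ => |p.1 - p.2| ^ (β - 1))
      ((volume.restrict (Ioc 0 t)).prod (volume.restrict (Ioc 0 u))) := by
    rw [MeasureTheory.integrable_prod_iff hmeas]
    refine ⟨Filter.Eventually.of_forall fun s => hinner s, ?_⟩
    have : IntegrableOn (fun s : ℝ => (F β s - F β (s - u)) / β) (Ioc 0 t) volume :=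
      hFc.integrableOn_Ioc
    exact this.congr (Filter.Eventually.of_forall fun s => (hnorm s).symm)
  have hIntOn : IntegrableOn (fun p : ℝ × ℝ => |p.1 - p.2| ^ (β - 1))
      ((Set.Ioc 0 t) ×ˢ (Set.Ioc 0 u)) := by
    rw [IntegrableOn, hrestr]; exact hint
  refine ⟨hIntOn, ?_⟩
  have hFub : (∫ p in (Set.Ioc 0 t) ×ˢ (Set.Ioc 0 u), |p.1 - p.2| ^ (β - 1))
      = ∫ s in Ioc 0 t, ∫ r in Ioc 0 u, |s - r| ^ (β - 1) := by
    rw [show (∫ p in (Set.Ioc 0 t) ×ˢ (Set.Ioc 0 u), |p.1 - p.2| ^ (β - 1))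
        = ∫ p, |p.1 - p.2| ^ (β - 1)
            ∂((volume.restrict (Ioc 0 t)).prod (volume.restrict (Ioc 0 u))) from by
      rw [← hrestr]]
    exact MeasureTheory.integral_prod _ hint
  rw [hFub]
  have hinner' : (∫ s in Ioc 0 t, ∫ r in Ioc 0 u, |s - r| ^ (β - 1))
      = ∫ s in Ioc 0 t, (F β s - F β (s - u)) / β := by
    refine setIntegral_congr_fun measurableSet_Ioc fun s _ => ?_
    exact inner_integral hβ0 s u hu
  have hg : IntervalIntegrable (fun x : ℝ => F β (x - u)) volume 0 t :=
    (Continuous.intervalIntegrable ((F_cont hβ0).comp (continuous_sub_right u)) 0 t)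
  rw [hinner', ← intervalIntegral.integral_of_le ht, intervalIntegral.integral_div,
    intervalIntegral.integral_sub ((F_cont hβ0).intervalIntegrable (μ := volume) 0 t) hg]
  have hc1 : (∫ s in (0:ℝ)..t, F β s) = (|t| ^ (β + 1) - |(0:ℝ)| ^ (β + 1)) / (β + 1) :=
    integral_F hβ0 0 t
  have hc2 : (∫ s in (0:ℝ)..t, F β (s - u))
      = (|t - u| ^ (β + 1) - |(0:ℝ) - u| ^ (β + 1)) / (β + 1) := by
    rw [intervalIntegral.integral_comp_sub_right (F β) u, integral_F hβ0]
  rw [hc1, hc2, abs_of_nonneg ht, zero_sub, abs_neg, abs_of_nonneg hu, abs_zero,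
    Real.zero_rpow hβ1, sub_zero]
  have hβne : β ≠ 0 := hβ0.ne'
  have hH : H = (β + 1) / 2 := by rw [hβ]; ring
  rw [hH]
  field_simp
  ring
end

section
/- Let α ∈ (0, 1), β ∈ [0, 1], and θ ∈ (π/2, π). Then there exists a constant C > 0, depending only on α, β, θ, such that for every z ∈ ℂ with z ≠ 0 and |arg z| ≤ θ, and every real λ > 0: z^α + λ ≠ 0 and λ^β |z^α + λ|^{−1} ≤ C |z|^{(β−1)α}, where z^α is the principal-branch complex power. -/
open Real Complex Set

set_option maxHeartbeats 1000000 in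
/-- Scalar resolvent estimate: for `α ∈ (0,1)`, `β ∈ [0,1]`, `θ ∈ (π/2, π)`, there is
`C > 0` such that for all `z` in the sector `Σ_θ` and all `λ > 0`, `z^α + λ ≠ 0` and
`λ^β |z^α + λ|⁻¹ ≤ C |z|^{(β−1)α}`. -/
theorem scalar_resolvent_estimate
    (α β θ : ℝ) (hα0 : 0 < α) (hα1 : α < 1) (hβ : β ∈ Set.Icc (0 : ℝ) 1)
    (hθ1 : Real.pi / 2 < θ) (hθ2 : θ < Real.pi) :
    ∃ C > (0 : ℝ), ∀ z : ℂ, z ≠ 0 → |z.arg| ≤ θ → ∀ lam : ℝ, 0 < lam →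
      z ^ (α : ℂ) + (lam : ℂ) ≠ 0 ∧
      lam ^ β * (‖z ^ (α : ℂ) + (lam : ℂ)‖)⁻¹ ≤
        C * (‖z‖) ^ ((β - 1) * α) := by
  have hθ0 : 0 < θ := lt_trans (by positivity) hθ1
  have hφπ : α * θ < Real.pi := lt_trans (by nlinarith) hθ2
  have hφ0 : 0 < α * θ := by positivity
  -- cos(αθ) > -1
  have hcos : Real.cos (α * θ) > -1 := by
    have h := Real.cos_lt_cos_of_nonneg_of_le_pi hφ0.le le_rfl hφπ
    rwa [Real.cos_pi] at h
  set m : ℝ := min 1 (1 + Real.cos (α * θ)) with hm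
  have hm0 : 0 < m := lt_min one_pos (by linarith)
  have hm1 : m ≤ 1 := min_le_left _ _
  set c : ℝ := Real.sqrt (m / 2) with hc
  have hc0 : 0 < c := Real.sqrt_pos.mpr (by linarith)
  refine ⟨c⁻¹, by positivity, ?_⟩
  intro z hz harg lam hlam
  have habs : 0 < ‖z‖ := norm_pos_iff.mpr hz
  set r : ℝ := ‖z‖ ^ α with hr
  have hr0 : 0 < r := Real.rpow_pos_of_pos habs α
  -- |z^α| = r
  have habsw : ‖z ^ (α:ℂ)‖ = r := by
    rw [Complex.norm_cpow_of_ne_zero hz]; simp [hr]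
  -- Re(z^α) = r cos(α arg z)
  have hrew : (z ^ (α:ℂ)).re = r * Real.cos (α * z.arg) := by
    rw [Complex.cpow_def_of_ne_zero hz, Complex.exp_re]
    simp [Complex.log_re, Complex.log_im, hr,
      Real.rpow_def_of_pos habs, mul_comm]
  -- cos(α arg z) ≥ cos(α θ)
  have hcosge : Real.cos (α * θ) ≤ Real.cos (α * z.arg) := by
    rw [← Real.cos_abs (α * z.arg)]
    apply Real.cos_le_cos_of_nonneg_of_le_pi (abs_nonneg _) (le_of_lt hφπ)
    rw [abs_mul, abs_of_pos hα0]
    nlinarith [abs_nonneg z.arg]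
  -- lower bound on |z^α + λ|²
  set w := z ^ (α:ℂ) with hw
  have hnormsq : ‖w + (lam:ℂ)‖ ^ 2 = r ^ 2 + 2 * lam * w.re + lam ^ 2 := by
    rw [Complex.sq_norm, Complex.normSq_add]
    have : (w * (starRingEnd ℂ) (lam:ℂ)).re = lam * w.re := by
      simp [Complex.mul_re]; ring
    rw [this, ← Complex.sq_norm, habsw]
    simp [Complex.normSq_ofReal]
    ring
  have hkey : (c * (r + lam)) ^ 2 ≤ ‖w + (lam:ℂ)‖ ^ 2 := by
    rw [hnormsq]
    have h1 : r * Real.cos (α * θ) ≤ w.re := by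
      rw [hrew]
      exact mul_le_mul_of_nonneg_left hcosge hr0.le
    have hcsq : c ^ 2 = m / 2 := Real.sq_sqrt (by linarith)
    have hme : m ≤ 1 + Real.cos (α * θ) := min_le_right _ _
    rw [mul_pow, hcsq]
    have hA : m * (r - lam) ^ 2 ≤ (r - lam) ^ 2 := by
      nlinarith [sq_nonneg (r - lam)]
    have hB : m * (2 * lam * r) ≤ (1 + Real.cos (α * θ)) * (2 * lam * r) :=
      mul_le_mul_of_nonneg_right hme (by positivity)
    have hC : 2 * lam * (r * Real.cos (α * θ)) ≤ 2 * lam * w.re :=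
      mul_le_mul_of_nonneg_left h1 (by positivity)
    calc m / 2 * (r + lam) ^ 2
        = m * (r - lam) ^ 2 / 2 + m * (2 * lam * r) := by ring
      _ ≤ (r - lam) ^ 2 / 2 + (1 + Real.cos (α * θ)) * (2 * lam * r) := by
          linarith
      _ ≤ r ^ 2 + 2 * lam * w.re + lam ^ 2 := by
          nlinarith [sq_nonneg (r - lam)]
  have hcabs : c * (r + lam) ≤ ‖w + (lam:ℂ)‖ := by
    have h2 : 0 ≤ c * (r + lam) := by positivity
    exact (pow_le_pow_iff_left₀ h2 (norm_nonneg _) two_ne_zero).mp hkey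
  have habspos : 0 < ‖w + (lam:ℂ)‖ :=
    lt_of_lt_of_le (by positivity) hcabs
  refine ⟨fun h => by simp [h] at habspos, ?_⟩
  -- weighted AM-GM: r^{1-β} λ^β ≤ r + λ
  have hamgm : r ^ (1 - β) * lam ^ β ≤ r + lam := by
    calc r ^ (1 - β) * lam ^ β ≤ (1 - β) * r + β * lam :=
          Real.geom_mean_le_arith_mean2_weighted (by linarith [hβ.2]) hβ.1
            hr0.le hlam.le (by ring)
      _ ≤ r + lam := by nlinarith [hβ.1, hβ.2]
  have hlow : c * (r ^ (1 - β) * lam ^ β) ≤ ‖w + (lam:ℂ)‖ :=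
    le_trans (by nlinarith) hcabs
  have hL : 0 < r ^ (1 - β) * lam ^ β := by positivity
  have hfin : lam ^ β * (‖w + (lam:ℂ)‖)⁻¹ ≤ c⁻¹ * r ^ (β - 1) := by
    rw [mul_inv_le_iff₀ habspos]
    have : c⁻¹ * r ^ (β - 1) * ‖w + (lam:ℂ)‖ ≥
        c⁻¹ * r ^ (β - 1) * (c * (r ^ (1 - β) * lam ^ β)) := by
      apply mul_le_mul_of_nonneg_left hlow (by positivity)
    refine le_trans ?_ this
    have hrr : r ^ (β - 1) * r ^ (1 - β) = 1 := by
      rw [← Real.rpow_add hr0]; norm_num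
    have heq : c⁻¹ * r ^ (β - 1) * (c * (r ^ (1 - β) * lam ^ β)) =
        (c⁻¹ * c) * (r ^ (β - 1) * r ^ (1 - β)) * lam ^ β := by ring
    rw [heq, hrr, inv_mul_cancel₀ hc0.ne']
    simp
  have hrβ : r ^ (β - 1) = ‖z‖ ^ ((β - 1) * α) := by
    rw [hr, ← Real.rpow_mul habs.le, mul_comm]
  rw [← hrβ]
  exact hfin
end

section
/- Let θ ∈ (π/2, π) satisfy cos θ / sin θ > −2/π. Then there exists a constant C > 0, depending only on θ, such that for every τ > 0, every κ ∈ (0, π/(τ sin θ)], and every z ∈ Γ^τ_{θ,κ}: e^{zτ} ≠ 1 and |e^{zτ} − 1 − zτ| / |e^{zτ} − 1| ≤ C τ |z|. -/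
open Real Complex Set

/-- Key pointwise lemma: for `w ≠ 0` with `|w| ≤ R < 2π`, `exp w ≠ 1`. -/
lemma aux_exp_ne_one (R : ℝ) (hR : R < 2 * Real.pi) (w : ℂ) (hw0 : w ≠ 0)
    (hwR : ‖w‖ ≤ R) : Complex.exp w ≠ 1 := by
  intro h
  rw [Complex.exp_eq_one_iff] at h
  obtain ⟨n, hn⟩ := h
  have hn0 : n ≠ 0 := by rintro rfl; simp at hn; exact hw0 hn
  have habs : ‖w‖ = |(n : ℝ)| * (2 * Real.pi) := by
    rw [hn]
    simp [norm_mul, _root_.abs_of_nonneg Real.pi_pos.le]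
  have h1 : (1 : ℝ) ≤ |(n : ℝ)| := by
    rw [← Int.cast_abs]
    exact_mod_cast Int.one_le_abs hn0
  nlinarith [Real.pi_pos]

lemma aux_abs_sub_le (a b : ℂ) : ‖a - b‖ ≤ ‖a‖ + ‖b‖ := by
  simpa [sub_eq_add_neg] using norm_add_le a (-b)

lemma aux_key (R : ℝ) (hR1 : 1 ≤ R) (hR2 : R < 2 * Real.pi) :
    ∃ C > (0 : ℝ), ∀ w : ℂ, w ≠ 0 → ‖w‖ ≤ R →
      Complex.exp w ≠ 1 ∧
      ‖Complex.exp w - 1 - w‖ / ‖Complex.exp w - 1‖ ≤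
        C * ‖w‖ := by
  -- compact annulus
  set A : Set ℂ := Metric.closedBall (0 : ℂ) R \ Metric.ball 0 (1/2) with hA
  have hAc : IsCompact A := (isCompact_closedBall _ _).diff Metric.isOpen_ball
  have hAne : A.Nonempty := by
    refine ⟨1, ?_, ?_⟩
    · simp [Complex.dist_eq]; linarith
    · simp [Complex.dist_eq]; norm_num
  obtain ⟨x, hxA, hmin'⟩ := hAc.exists_isMinOn hAne
    ((continuous_norm.comp ((Complex.continuous_exp).sub continuous_const)).continuousOn)
  have hmin : ∀ y ∈ A, ‖Complex.exp x - 1‖ ≤ ‖Complex.exp y - 1‖ :=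
    fun y hy => hmin' hy
  have hxabs : 1/2 ≤ ‖x‖ ∧ ‖x‖ ≤ R := by
    obtain ⟨h1, h2⟩ := hxA
    simp [Complex.dist_eq] at h1 h2
    exact ⟨by linarith, h1⟩
  have hx0 : x ≠ 0 := by
    intro h; rw [h] at hxabs; simp at hxabs; linarith [hxabs.1]
  set c := ‖Complex.exp x - 1‖ with hc
  have hcpos : 0 < c := by
    rw [hc]
    have := aux_exp_ne_one R hR2 x hx0 hxabs.2
    simpa [norm_pos_iff, sub_eq_zero] using this
  refine ⟨2 + 2 * (Real.exp R + 1 + R) / c, by positivity, ?_⟩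
  intro w hw0 hwR
  have hne := aux_exp_ne_one R hR2 w hw0 hwR
  have hden : 0 < ‖Complex.exp w - 1‖ := by
    simpa [norm_pos_iff, sub_eq_zero] using hne
  refine ⟨hne, ?_⟩
  rw [div_le_iff₀ hden]
  have hwpos : 0 < ‖w‖ := norm_pos_iff.mpr hw0
  have hCnn : (0:ℝ) ≤ 2 * (Real.exp R + 1 + R) / c := by positivity
  rcases le_or_gt (‖w‖) (1/2) with hsmall | hbig
  · -- small case
    have hq : ‖Complex.exp w - 1 - w‖ ≤ ‖w‖ ^ 2 :=
      Complex.norm_exp_sub_one_sub_id_le (by linarith)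
    have htri : ‖w‖ ≤ ‖Complex.exp w - 1‖ +
        ‖Complex.exp w - 1 - w‖ := by
      have : w = (Complex.exp w - 1) - (Complex.exp w - 1 - w) := by ring
      calc ‖w‖ = ‖(Complex.exp w - 1) - (Complex.exp w - 1 - w)‖ := by
            rw [← this]
        _ ≤ _ := aux_abs_sub_le _ _
    have hlow : ‖w‖ / 2 ≤ ‖Complex.exp w - 1‖ := by nlinarith
    calc ‖Complex.exp w - 1 - w‖ ≤ ‖w‖ ^ 2 := hq
      _ = 2 * ‖w‖ * (‖w‖ / 2) := by ring
      _ ≤ 2 * ‖w‖ * ‖Complex.exp w - 1‖ :=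
          mul_le_mul_of_nonneg_left hlow (by positivity)
      _ ≤ (2 + 2 * (Real.exp R + 1 + R) / c) * ‖w‖ *
            ‖Complex.exp w - 1‖ := by
          nlinarith [mul_nonneg hCnn (mul_nonneg hwpos.le hden.le)]
  · -- big case
    have hwA : w ∈ A := by
      constructor
      · simp [Complex.dist_eq]; exact hwR
      · simp [Complex.dist_eq]; linarith
    have hlow : c ≤ ‖Complex.exp w - 1‖ := hmin w hwA
    have hup : ‖Complex.exp w - 1 - w‖ ≤ Real.exp R + 1 + R := by
      have ht1 : ‖Complex.exp w - 1‖ ≤ ‖Complex.exp w‖ + 1 := by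
        simpa using aux_abs_sub_le (Complex.exp w) 1
      calc ‖Complex.exp w - 1 - w‖
          ≤ ‖Complex.exp w - 1‖ + ‖w‖ := aux_abs_sub_le _ _
        _ ≤ (‖Complex.exp w‖ + 1) + ‖w‖ := by linarith
        _ ≤ Real.exp R + 1 + R := by
            have h1 : ‖Complex.exp w‖ = Real.exp w.re := Complex.norm_exp w
            have h2 : w.re ≤ ‖w‖ := Complex.re_le_norm w
            have h3 : Real.exp w.re ≤ Real.exp R := Real.exp_le_exp.mpr (by linarith)
            linarith
    have hposE : (0:ℝ) < Real.exp R + 1 + R := by positivity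
    have heq : (2 * (Real.exp R + 1 + R) / c) * ‖w‖ * c =
        2 * (Real.exp R + 1 + R) * ‖w‖ := by
      field_simp
    calc ‖Complex.exp w - 1 - w‖ ≤ Real.exp R + 1 + R := hup
      _ ≤ 2 * (Real.exp R + 1 + R) * ‖w‖ := by nlinarith
      _ = (2 * (Real.exp R + 1 + R) / c) * ‖w‖ * c := heq.symm
      _ ≤ (2 * (Real.exp R + 1 + R) / c) * ‖w‖ *
            ‖Complex.exp w - 1‖ :=
          mul_le_mul_of_nonneg_left hlow (mul_nonneg hCnn hwpos.le)
      _ ≤ (2 + 2 * (Real.exp R + 1 + R) / c) * ‖w‖ *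
            ‖Complex.exp w - 1‖ := by
          nlinarith [mul_nonneg hwpos.le hden.le]

/-- On the truncated contour `Γ^τ_{θ,κ}` with `θ ∈ (π/2, arccot(−2/π))` one has
`e^{zτ} ≠ 1` and `|e^{zτ} − 1 − zτ| / |e^{zτ} − 1| ≤ Cτ|z|`. -/
theorem exp_taylor_remainder_ratio_bound
    (θ : ℝ) (hθ1 : Real.pi / 2 < θ) (hθ2 : θ < Real.pi)
    (hθ3 : Real.cos θ / Real.sin θ > -2 / Real.pi) :
    ∃ C > (0 : ℝ),
      ∀ τ : ℝ, 0 < τ → ∀ κ : ℝ, 0 < κ → κ ≤ Real.pi / (τ * Real.sin θ) →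
      ∀ z ∈ GammaTau θ κ τ,
        Complex.exp (z * τ) ≠ 1 ∧
        ‖Complex.exp (z * τ) - 1 - z * τ‖ / ‖Complex.exp (z * τ) - 1‖ ≤
          C * τ * ‖z‖ := by
  have hsinpos : 0 < Real.sin θ :=
    Real.sin_pos_of_pos_of_lt_pi (by linarith [Real.pi_pos]) hθ2
  -- From hθ3 derive sin θ > 1/2
  have hcosneg : Real.cos θ < 0 :=
    Real.cos_neg_of_pi_div_two_lt_of_lt hθ1 (by linarith [Real.pi_pos])
  have hA : -2 / Real.pi * Real.sin θ < Real.cos θ := (lt_div_iff₀ hsinpos).mp hθ3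
  have hsin : (1:ℝ)/2 < Real.sin θ := by
    by_contra h
    push_neg at h
    have hpyth := Real.sin_sq_add_cos_sq θ
    have hpi3 : (3:ℝ) < Real.pi := Real.pi_gt_three
    have hA' : -2 * Real.sin θ < Real.cos θ * Real.pi := by
      have hpi : (0:ℝ) < Real.pi := Real.pi_pos
      rw [div_mul_eq_mul_div] at hA
      exact (div_lt_iff₀ hpi).mp hA
    nlinarith [sq_nonneg (Real.cos θ * Real.pi + 2 * Real.sin θ), hsinpos]
  set R := Real.pi / Real.sin θ with hRdef
  have hR1 : 1 ≤ R := by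
    rw [le_div_iff₀ hsinpos]
    nlinarith [Real.sin_le_one θ, Real.pi_gt_three]
  have hR2 : R < 2 * Real.pi := by
    rw [div_lt_iff₀ hsinpos]
    nlinarith [Real.pi_pos]
  obtain ⟨C, hCpos, hC⟩ := aux_key R hR1 hR2
  refine ⟨C, hCpos, ?_⟩
  intro τ hτ κ hκ hκle z hz
  have hzabs : 0 < ‖z‖ ∧ ‖z‖ ≤ Real.pi / (τ * Real.sin θ) := by
    rcases hz with ⟨h1, h2, _⟩ | ⟨h1, _⟩
    · exact ⟨lt_of_lt_of_le hκ h1, h2⟩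
    · exact ⟨h1 ▸ hκ, h1 ▸ hκle⟩
  have hz0 : z ≠ 0 := by
    intro h
    rw [h, norm_zero] at hzabs
    exact lt_irrefl 0 hzabs.1
  have hw0 : z * (τ : ℂ) ≠ 0 := by
    apply mul_ne_zero hz0
    exact_mod_cast hτ.ne'
  have habsw : ‖z * (τ : ℂ)‖ = ‖z‖ * τ := by
    rw [norm_mul, Complex.norm_real, Real.norm_eq_abs, abs_of_pos hτ]
  have hwR : ‖z * (τ : ℂ)‖ ≤ R := by
    rw [habsw, hRdef]
    have : ‖z‖ * τ ≤ Real.pi / (τ * Real.sin θ) * τ := by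
      exact mul_le_mul_of_nonneg_right hzabs.2 hτ.le
    calc ‖z‖ * τ ≤ Real.pi / (τ * Real.sin θ) * τ := this
      _ = Real.pi / Real.sin θ := by field_simp
  obtain ⟨hne, hration⟩ := hC (z * (τ : ℂ)) hw0 hwR
  refine ⟨hne, ?_⟩
  calc ‖Complex.exp (z * τ) - 1 - z * τ‖ /
        ‖Complex.exp (z * τ) - 1‖ ≤ C * ‖z * (τ : ℂ)‖ := hration
    _ = C * τ * ‖z‖ := by rw [habsw]; ring
end
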